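/- arXiv:0902.3074 — 2 statements merged into one kernel-verified Lean document; each statement's English description precedes it below -/
import Mathlib

section
/- For all equivalent reduced n-expressions u, v of length ℓ, the combinatorial distance satisfies dist(u,v) ≤ (n-1)(n-2)ℓ. -/
open scoped Classical

noncomputable section

/-- adjacent transposition `s i = (i, i+1)` acting on ℕ (1-indexed positions) -/
def s (i : ℕ) : Equiv.Perm ℕ := Equiv.swap i (i + 1)

/-- permutation represented by a word; letters are applied left to right
(`wperm (u ++ v) = wperm v * wperm u`, i.e. `u` first, then `v`). -/
def wperm (w : List ℕ) : Equiv.Perm ℕ := ((w.map s).reverse).prod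

/-- `w` is an `n`-expression: a word in the letters `s 1, ..., s (n-1)` -/
def IsExpr (n : ℕ) (w : List ℕ) : Prop := ∀ i ∈ w, 1 ≤ i ∧ i + 1 ≤ n

/-- set of inversions of a permutation of `{1,...,n}` -/
def invSet (n : ℕ) (π : Equiv.Perm ℕ) : Finset (ℕ × ℕ) :=
  (Finset.Icc 1 n ×ˢ Finset.Icc 1 n).filter (fun pq => pq.1 < pq.2 ∧ π pq.2 < π pq.1)

/-- a reduced `n`-expression: its length equals the inversion number of the
permutation it represents -/
def ReducedExpr (n : ℕ) (w : List ℕ) : Prop :=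
  IsExpr n w ∧ w.length = (invSet n (wperm w)).card

/-- one application of a braid relation `s i s j s i = s j s i s j`, `|i-j| = 1` -/
inductive StepI : List ℕ → List ℕ → Prop
  | mk (a b : List ℕ) (i j : ℕ) (h : i + 1 = j ∨ j + 1 = i) :
      StepI (a ++ i :: j :: i :: b) (a ++ j :: i :: j :: b)

/-- one application of a commutation relation `s i s j = s j s i`, `|i-j| ≥ 2` -/
inductive StepII : List ℕ → List ℕ → Prop
  | mk (a b : List ℕ) (i j : ℕ) (h : i + 2 ≤ j ∨ j + 2 ≤ i) :
      StepII (a ++ i :: j :: b) (a ++ j :: i :: b)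

def BraidStep (u v : List ℕ) : Prop := StepI u v ∨ StepII u v

/-- `c` is a derivation from `u` to `v` by braid relations -/
def IsDeriv (u v : List ℕ) (c : List (List ℕ)) : Prop :=
  c.Chain' BraidStep ∧ c.head? = some u ∧ c.getLast? = some v

/-- combinatorial distance: minimal number of braid relations transforming `u` into `v` -/
def dist (u v : List ℕ) : ℕ :=
  sInf {k | ∃ c, IsDeriv u v c ∧ c.length = k + 1}

/-- the word `s_{j,i} = s_{j-1} s_{j-2} ... s_i` (empty if `j ≤ i`) -/
def sji (j i : ℕ) : List ℕ := (List.range (j - i)).map (fun k => j - 1 - k)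

/-- the normal word `s_{1,f(1)} s_{2,f(2)} ... s_{n,f(n)}` -/
def normalWord (n : ℕ) (f : ℕ → ℕ) : List ℕ :=
  ((List.range n).map (fun k => sji (k + 1) (f (k + 1)))).flatten

/-- `f : {1,...,n} → {1,...,n}` with `1 ≤ f i ≤ i` for all `i` -/
def IsNormalFun (n : ℕ) (f : ℕ → ℕ) : Prop := ∀ i ∈ Finset.Icc 1 n, 1 ≤ f i ∧ f i ≤ i

/-- names of the successive crossings: the name of a letter is the pair of starting
positions of the two strands crossing there -/
def namesAux : Equiv.Perm ℕ → List ℕ → List (Finset ℕ)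
  | _, [] => []
  | π, i :: rest => ({π⁻¹ i, π⁻¹ (i + 1)} : Finset ℕ) :: namesAux (s i * π) rest

/-- the name sequence `S(w)` of a word -/
def names (w : List ℕ) : List (Finset ℕ) := namesAux 1 w

/-- two entries occur in the same relative order in `S` and `S'` -/
def sameOrder (S S' : List (Finset ℕ)) (a b : Finset ℕ) : Prop :=
  (S.idxOf a < S.idxOf b) ↔ (S'.idxOf a < S'.idxOf b)

/-- `I₃(S,S')`: number of triples `{p,q,r} ⊆ {1,...,n}` such that the relative order of
the three pairs `{p,q}, {p,r}, {q,r}` is not the same in `S` and `S'` -/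
def I3 (n : ℕ) (S S' : List (Finset ℕ)) : ℕ :=
  (((Finset.Icc 1 n).powersetCard 3).filter (fun t =>
    ¬ ∀ a ∈ t.powersetCard 2, ∀ b ∈ t.powersetCard 2, sameOrder S S' a b)).card

/-- `I₂,₂(S,S')`: number of unordered pairs of disjoint pairs in `{1,...,n}` whose
relative order is not the same in `S` and `S'` -/
def I22 (n : ℕ) (S S' : List (Finset ℕ)) : ℕ :=
  ((((Finset.Icc 1 n).powersetCard 2).powersetCard 2).filter (fun P =>
    (∀ a ∈ P, ∀ b ∈ P, a ≠ b → Disjoint a b) ∧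
    ¬ ∀ a ∈ P, ∀ b ∈ P, sameOrder S S' a b)).card

/-- total number of unordered pairs of entries whose relative order differs -/
def InvCount (S S' : List (Finset ℕ)) : ℕ :=
  ((S.toFinset.powersetCard 2).filter (fun P =>
    ¬ ∀ a ∈ P, ∀ b ∈ P, sameOrder S S' a b)).card

/-- number of type I steps in a derivation -/
def countStepsI (c : List (List ℕ)) : ℕ :=
  ((Finset.range (c.length - 1)).filter (fun k => StepI (c.getD k []) (c.getD (k + 1) []))).card

/-- number of type II steps in a derivation -/
def countStepsII (c : List (List ℕ)) : ℕ :=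
  ((Finset.range (c.length - 1)).filter (fun k => StepII (c.getD k []) (c.getD (k + 1) []))).card

/-- position of the strand starting at position `p` after the first `k` letters of `w` -/
def strandPos (w : List ℕ) (p k : ℕ) : ℕ := wperm (w.take k) p

/-- number of unit squares to the right of the `n`-th strand in the braid diagram of `w`,
drawn on an `(n-1) × length w` grid -/
def area (n : ℕ) (w : List ℕ) : ℕ :=
  ((List.range w.length).map (fun k => n - max (strandPos w n k) (strandPos w n (k + 1)))).sum

/-- `u_n = s_{1,1} s_{2,1} ... s_{n,1}` -/
def uWord (n : ℕ) : List ℕ := ((List.range n).map (fun k => sji (k + 1) 1)).flatten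

/-- `v_n = s_{n,1} s_{n,2} ... s_{n,n-1}` -/
def vWord (n : ℕ) : List ℕ := ((List.range (n - 1)).map (fun k => sji n (k + 1))).flatten


section Part1

/-! ### basic permutation lemmas -/

lemma s_apply (i x : ℕ) : s i x = if x = i then i + 1 else if x = i + 1 then i else x := by
  simp [s, Equiv.swap_apply_def]

lemma wperm_nil : wperm [] = 1 := rfl

lemma wperm_cons (i : ℕ) (w : List ℕ) : wperm (i :: w) = wperm w * s i := by
  simp [wperm]

lemma wperm_append (u v : List ℕ) : wperm (u ++ v) = wperm v * wperm u := by
  simp [wperm]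

lemma wperm_singleton (i : ℕ) : wperm [i] = s i := by
  simp [wperm]

set_option maxHeartbeats 1600000 in
lemma s_mul_s_adj (i j : ℕ) (h : i + 1 = j ∨ j + 1 = i) :
    s i * s j * s i = s j * s i * s j := by
  have key : ∀ k, s k * s (k+1) * s k = s (k+1) * s k * s (k+1) := by
    intro k
    ext x
    simp only [Equiv.Perm.mul_apply, s_apply]
    split_ifs <;> omega
  rcases h with h | h
  · subst h; exact key i
  · subst h; exact (key j).symm

set_option maxHeartbeats 1600000 in
lemma s_mul_s_comm (i j : ℕ) (h : i + 2 ≤ j ∨ j + 2 ≤ i) :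
    s i * s j = s j * s i := by
  ext x
  simp only [Equiv.Perm.mul_apply, s_apply]
  split_ifs <;> omega

lemma s_mul_self (i : ℕ) : s i * s i = 1 := by
  simp [s]

/-! ### braid steps preserve permutation, length, letters -/

lemma braidStep_wperm {u v : List ℕ} (h : BraidStep u v) : wperm u = wperm v := by
  rcases h with ⟨a, b, i, j, h⟩ | ⟨a, b, i, j, h⟩
  · have key : wperm (i :: j :: i :: b) = wperm (j :: i :: j :: b) := by
      simp only [wperm_cons, mul_assoc]
      congr 1
      simp only [← mul_assoc]
      exact s_mul_s_adj i j h
    calc wperm (a ++ i :: j :: i :: b) = wperm (i :: j :: i :: b) * wperm a := by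
            rw [← wperm_append]
      _ = wperm (j :: i :: j :: b) * wperm a := by rw [key]
      _ = wperm (a ++ j :: i :: j :: b) := by rw [← wperm_append]
  · have key : wperm (i :: j :: b) = wperm (j :: i :: b) := by
      simp only [wperm_cons, mul_assoc]
      congr 1
      exact s_mul_s_comm j i h.symm
    calc wperm (a ++ i :: j :: b) = wperm (i :: j :: b) * wperm a := by rw [← wperm_append]
      _ = wperm (j :: i :: b) * wperm a := by rw [key]
      _ = wperm (a ++ j :: i :: b) := by rw [← wperm_append]

lemma braidStep_length {u v : List ℕ} (h : BraidStep u v) : u.length = v.length := by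
  rcases h with ⟨a, b, i, j, _⟩ | ⟨a, b, i, j, _⟩ <;> simp

lemma braidStep_mem {u v : List ℕ} (h : BraidStep u v) {x : ℕ} (hx : x ∈ v) : x ∈ u := by
  rcases h with ⟨a, b, i, j, _⟩ | ⟨a, b, i, j, _⟩ <;>
    simp only [List.mem_append, List.mem_cons] at hx ⊢ <;> tauto

lemma braidStep_symm {u v : List ℕ} (h : BraidStep u v) : BraidStep v u := by
  rcases h with ⟨a, b, i, j, h⟩ | ⟨a, b, i, j, h⟩
  · exact Or.inl (StepI.mk a b j i h.symm)
  · exact Or.inr (StepII.mk a b j i h.symm)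

end Part1
section Part2

/-- `Rw k u v`: `u` can be transformed to `v` by at most `k` braid relations. -/
def Rw (k : ℕ) (u v : List ℕ) : Prop := ∃ c, IsDeriv u v c ∧ c.length ≤ k + 1

lemma Rw.refl (u : List ℕ) (k : ℕ) : Rw k u u :=
  ⟨[u], ⟨List.isChain_singleton u, rfl, rfl⟩, by simp⟩

lemma Rw.of_eq {u v : List ℕ} (h : u = v) (k : ℕ) : Rw k u v := h ▸ Rw.refl u k

lemma Rw.mono {k k' : ℕ} {u v : List ℕ} (hk : k ≤ k') (h : Rw k u v) : Rw k' u v := by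
  obtain ⟨c, hc, hl⟩ := h
  exact ⟨c, hc, hl.trans (by omega)⟩

lemma Rw.single {u v : List ℕ} (h : BraidStep u v) : Rw 1 u v :=
  ⟨[u, v], ⟨List.isChain_pair.mpr h, rfl, rfl⟩, by simp⟩

lemma deriv_ne_nil {u v : List ℕ} {c : List (List ℕ)} (h : IsDeriv u v c) : c ≠ [] := by
  intro hc; subst hc; simp [IsDeriv] at h

lemma Rw.trans {k₁ k₂ : ℕ} {u v w : List ℕ} (h₁ : Rw k₁ u v) (h₂ : Rw k₂ v w) :
    Rw (k₁ + k₂) u w := by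
  obtain ⟨c₁, ⟨hch₁, hh₁, hl₁⟩, hlen₁⟩ := h₁
  obtain ⟨c₂, ⟨hch₂, hh₂, hl₂⟩, hlen₂⟩ := h₂
  rcases c₂ with _ | ⟨v', c₂'⟩
  · simp at hh₂
  have hv : v' = v := by simpa using hh₂
  rw [hv] at hch₂ hl₂ hlen₂
  rcases c₂' with _ | ⟨x, c₂''⟩
  · -- c₂ = [v], so w = v
    have hvw : v = w := by simpa using hl₂
    subst hvw
    exact ⟨c₁, ⟨hch₁, hh₁, hl₁⟩, by omega⟩
  · refine ⟨c₁ ++ (x :: c₂''), ⟨?_, ?_, ?_⟩, ?_⟩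
    · change List.IsChain _ _; rw [List.isChain_append]
      refine ⟨hch₁, (List.isChain_cons.mp hch₂).2, ?_⟩
      intro p hp q hq
      have hp' : p = v := by rw [hl₁] at hp; symm; simpa using hp
      have hq' : q = x := by symm; simpa using hq
      rw [hp', hq']
      exact (List.isChain_cons_cons.mp hch₂).1
    · rcases c₁ with _ | ⟨u', c₁'⟩
      · simp at hh₁
      simpa using hh₁
    · have hx : (x :: c₂'').getLast? = some w := by
        rw [← hl₂, List.getLast?_cons_cons]
      rw [List.getLast?_append, hx]
      rfl
    · have h1 : c₁.length ≤ k₁ + 1 := hlen₁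
      have h2 : (v :: x :: c₂'').length ≤ k₂ + 1 := hlen₂
      simp only [List.length_cons] at h2 ⊢
      simp only [List.length_append, List.length_cons]
      omega

lemma Rw.symm {k : ℕ} {u v : List ℕ} (h : Rw k u v) : Rw k v u := by
  obtain ⟨c, ⟨hch, hh, hl⟩, hlen⟩ := h
  refine ⟨c.reverse, ⟨?_, ?_, ?_⟩, by simpa using hlen⟩
  · change List.IsChain _ _; rw [List.isChain_reverse]
    exact hch.imp (fun _ _ hab => braidStep_symm hab)
  · rw [List.head?_reverse]; exact hl
  · rw [List.getLast?_reverse]; exact hh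

lemma Rw.congr {k : ℕ} {u v : List ℕ} (p q : List ℕ) (h : Rw k u v) :
    Rw k (p ++ u ++ q) (p ++ v ++ q) := by
  obtain ⟨c, ⟨hch, hh, hl⟩, hlen⟩ := h
  refine ⟨c.map (fun w => p ++ w ++ q), ⟨?_, ?_, ?_⟩, by simpa using hlen⟩
  · change List.IsChain _ _; rw [List.isChain_map]
    refine hch.imp (fun w1 w2 hst => ?_)
    rcases hst with ⟨a, b, i, j, hij⟩ | ⟨a, b, i, j, hij⟩
    · refine Or.inl ?_
      have e1 : p ++ (a ++ i :: j :: i :: b) ++ q = (p ++ a) ++ i :: j :: i :: (b ++ q) := by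
        simp
      have e2 : p ++ (a ++ j :: i :: j :: b) ++ q = (p ++ a) ++ j :: i :: j :: (b ++ q) := by
        simp
      rw [e1, e2]
      exact StepI.mk _ _ i j hij
    · refine Or.inr ?_
      have e1 : p ++ (a ++ i :: j :: b) ++ q = (p ++ a) ++ i :: j :: (b ++ q) := by simp
      have e2 : p ++ (a ++ j :: i :: b) ++ q = (p ++ a) ++ j :: i :: (b ++ q) := by simp
      rw [e1, e2]
      exact StepII.mk _ _ i j hij
  · rw [List.head?_map, hh]; rfl
  · rw [List.getLast?_map, hl]; rfl

/-- derivations preserve permutation, length, and letters -/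
lemma deriv_props : ∀ (c : List (List ℕ)) (u v : List ℕ), List.Chain' BraidStep c →
    c.head? = some u → c.getLast? = some v →
    wperm u = wperm v ∧ u.length = v.length ∧ (∀ x ∈ v, x ∈ u) := by
  intro c
  induction c with
  | nil => intro u v _ hh _; simp at hh
  | cons a c' ih =>
    intro u v hch hh hl
    obtain rfl : u = a := by symm; simpa using hh
    rcases c' with _ | ⟨b, c''⟩
    · obtain rfl : u = v := by simpa using hl
      exact ⟨rfl, rfl, fun x hx => hx⟩
    · have hstep : BraidStep u b := (List.isChain_cons_cons.mp hch).1
      have hrest := ih b v (List.isChain_cons_cons.mp hch).2 rfl (by simpa using hl)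
      exact ⟨(braidStep_wperm hstep).trans hrest.1,
        (braidStep_length hstep).trans hrest.2.1,
        fun x hx => braidStep_mem hstep (hrest.2.2 x hx)⟩

lemma Rw.props {k : ℕ} {u v : List ℕ} (h : Rw k u v) :
    wperm u = wperm v ∧ u.length = v.length ∧ (∀ x ∈ v, x ∈ u) := by
  obtain ⟨c, ⟨hch, hh, hl⟩, -⟩ := h
  exact deriv_props c u v hch hh hl

lemma Rw.wperm_eq {k : ℕ} {u v : List ℕ} (h : Rw k u v) : wperm u = wperm v := h.props.1

lemma Rw.length_eq {k : ℕ} {u v : List ℕ} (h : Rw k u v) : u.length = v.length := h.props.2.1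

lemma Rw.reduced {k n : ℕ} {u v : List ℕ} (h : Rw k u v) (hr : ReducedExpr n u) :
    ReducedExpr n v := by
  refine ⟨fun i hi => hr.1 i (h.props.2.2 i hi), ?_⟩
  rw [← h.length_eq, ← h.wperm_eq]
  exact hr.2

lemma dist_le_of_rw {k : ℕ} {u v : List ℕ} (h : Rw k u v) : dist u v ≤ k := by
  obtain ⟨c, hc, hlen⟩ := h
  have hne : c ≠ [] := deriv_ne_nil hc
  have hpos : 1 ≤ c.length := List.length_pos_iff.mpr hne
  have hmem : c.length - 1 ∈ {k | ∃ c', IsDeriv u v c' ∧ c'.length = k + 1} :=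
    ⟨c, hc, by omega⟩
  exact le_trans (Nat.sInf_le hmem) (by omega)

end Part2
section Part3

/-! ### sji lemmas -/

lemma sji_length (j i : ℕ) : (sji j i).length = j - i := by simp [sji]

lemma sji_nil {j i : ℕ} (h : j ≤ i) : sji j i = [] := by
  simp [sji, Nat.sub_eq_zero_of_le h]

lemma mem_sji {j i y : ℕ} (h : y ∈ sji j i) : i ≤ y ∧ y + 1 ≤ j := by
  simp only [sji, List.mem_map, List.mem_range] at h
  obtain ⟨k, hk, rfl⟩ := h
  omega

lemma sji_split {j e i : ℕ} (h1 : i ≤ e) (h2 : e ≤ j) : sji j i = sji j e ++ sji e i := by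
  rcases Nat.eq_zero_or_pos e with rfl | he
  · interval_cases i
    simp [sji_nil]
  · unfold sji
    rw [show j - i = (j - e) + (e - i) by omega, List.range_add, List.map_append,
      List.map_map]
    congr 1
    apply List.map_congr_left
    intro k hk
    simp only [List.mem_range] at hk
    simp only [Function.comp_apply]
    omega

lemma sji_single (i : ℕ) : sji (i + 1) i = [i] := by
  unfold sji
  rw [show i + 1 - i = 1 by omega, List.range_succ]
  simp

lemma sji_cons {j i : ℕ} (h : i < j) : sji j i = (j - 1) :: sji (j - 1) i := by
  rw [sji_split (show i ≤ j - 1 by omega) (show j - 1 ≤ j by omega)]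
  rw [show j = (j - 1) + 1 by omega]
  simp [sji_single]

lemma sji_snoc {j i : ℕ} (h : i < j) : sji j i = sji j (i + 1) ++ [i] := by
  rw [sji_split (show i ≤ i + 1 by omega) (show i + 1 ≤ j by omega), sji_single]

/-! ### wperm evaluation facts -/

lemma wperm_fix {m : ℕ} : ∀ (w : List ℕ), (∀ y ∈ w, 1 ≤ y ∧ y + 1 ≤ m) →
    ∀ x, (x = 0 ∨ m < x) → wperm w x = x := by
  intro w
  induction w with
  | nil => intro _ x _; rfl
  | cons i w' ih =>
    intro hw x hx
    have hi := hw i (by simp)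
    have hw' : ∀ y ∈ w', 1 ≤ y ∧ y + 1 ≤ m := fun y hy => hw y (by simp [hy])
    rw [wperm_cons, Equiv.Perm.mul_apply]
    have hsx : s i x = x := by rw [s_apply]; split_ifs <;> omega
    rw [hsx]
    exact ih hw' x hx

lemma wperm_mem_Icc {m : ℕ} : ∀ (w : List ℕ), (∀ y ∈ w, 1 ≤ y ∧ y + 1 ≤ m) →
    ∀ x, 1 ≤ x → x ≤ m → 1 ≤ wperm w x ∧ wperm w x ≤ m := by
  intro w
  induction w with
  | nil => intro _ x h1 h2; exact ⟨h1, h2⟩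
  | cons i w' ih =>
    intro hw x h1 h2
    have hi := hw i (by simp)
    have hw' : ∀ y ∈ w', 1 ≤ y ∧ y + 1 ≤ m := fun y hy => hw y (by simp [hy])
    rw [wperm_cons, Equiv.Perm.mul_apply]
    have : 1 ≤ s i x ∧ s i x ≤ m := by rw [s_apply]; split_ifs <;> omega
    exact ih hw' _ this.1 this.2

lemma wperm_sji (m : ℕ) : ∀ (n : ℕ), m ≤ n → ∀ x,
    wperm (sji n m) x = if x = n then m else if m ≤ x ∧ x < n then x + 1 else x := by
  intro n
  induction n with
  | zero =>
    intro hm x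
    interval_cases m
    rw [sji_nil le_rfl, wperm_nil]
    have h1 : (1 : Equiv.Perm ℕ) x = x := rfl
    rw [h1]
    split_ifs <;> omega
  | succ n ih =>
    intro hm x
    rcases Nat.lt_or_ge m (n + 1) with hlt | hge
    · have hmn : m ≤ n := by omega
      rw [sji_cons (by omega)]
      simp only [Nat.add_sub_cancel]
      rw [wperm_cons, Equiv.Perm.mul_apply, ih hmn (s n x), s_apply]
      split_ifs <;> omega
    · have : m = n + 1 := by omega
      subst this
      rw [sji_nil le_rfl, wperm_nil]
      have : (1 : Equiv.Perm ℕ) x = x := rfl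
      rw [this]
      split_ifs <;> omega

lemma wperm_sji_apply_top {n m : ℕ} (h : m ≤ n) : wperm (sji n m) n = m := by
  rw [wperm_sji m n h n, if_pos rfl]

/-! ### commuting a letter across a block -/

lemma rw_comm_block : ∀ (D : List ℕ) (x : ℕ), (∀ y ∈ D, x + 2 ≤ y ∨ y + 2 ≤ x) →
    Rw D.length (D ++ [x]) (x :: D) := by
  intro D
  induction D with
  | nil => intro x _; exact Rw.of_eq rfl 0
  | cons y D' ih =>
    intro x hD
    have hy := hD y (by simp)
    have hD' : ∀ z ∈ D', x + 2 ≤ z ∨ z + 2 ≤ x := fun z hz => hD z (by simp [hz])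
    have step1 : Rw D'.length ((y :: D') ++ [x]) (y :: x :: D') := by
      have := Rw.congr [y] [] (ih x hD')
      simp only [List.append_nil] at this
      have e1 : [y] ++ (D' ++ [x]) = (y :: D') ++ [x] := by simp
      have e2 : [y] ++ (x :: D') = y :: x :: D' := by simp
      rw [e1, e2] at this
      exact this
    have step2 : Rw 1 (y :: x :: D') (x :: y :: D') := by
      have : StepII ([] ++ y :: x :: D') ([] ++ x :: y :: D') :=
        StepII.mk [] D' y x (by omega)
      simp only [List.nil_append] at this
      exact Rw.single (Or.inr this)
    have := step1.trans step2
    simpa [Nat.add_comm] using this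

/-! ### inversion counting -/

lemma mem_invSet {n : ℕ} {π : Equiv.Perm ℕ} {p q : ℕ} :
    (p, q) ∈ invSet n π ↔ (1 ≤ p ∧ p ≤ n) ∧ (1 ≤ q ∧ q ≤ n) ∧ p < q ∧ π q < π p := by
  simp [invSet, Finset.mem_filter, Finset.mem_product, Finset.mem_Icc, and_assoc]

lemma invSet_one (n : ℕ) : invSet n 1 = ∅ := by
  ext ⟨p, q⟩
  simp only [mem_invSet, Finset.notMem_empty, iff_false]
  rintro ⟨_, _, h1, h2⟩
  simp only [Equiv.Perm.one_apply] at h2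
  omega

lemma s_s_apply (i x : ℕ) : s i (s i x) = x := by
  have : (s i * s i) x = x := by rw [s_mul_self]; rfl
  simpa using this

lemma invStep (n i : ℕ) (σ : Equiv.Perm ℕ) (hi : 1 ≤ i) (hin : i + 1 ≤ n) :
    (invSet n (σ * s i)).card ≤ (invSet n σ).card + 1 := by
  set A := invSet n (σ * s i) with hA
  have hsub : A ⊆ insert (i, i + 1) (A.erase (i, i + 1)) := by
    intro x hx
    by_cases hxe : x = (i, i + 1)
    · simp [hxe]
    · exact Finset.mem_insert_of_mem (Finset.mem_erase.mpr ⟨hxe, hx⟩)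
  have h1 : A.card ≤ (A.erase (i, i + 1)).card + 1 :=
    le_trans (Finset.card_le_card hsub) (Finset.card_insert_le _ _)
  have h2 : (A.erase (i, i + 1)).card ≤ (invSet n σ).card := by
    apply Finset.card_le_card_of_injOn (fun pq => (s i pq.1, s i pq.2))
    · rintro ⟨p, q⟩ hpq
      simp only [Finset.mem_coe] at hpq ⊢
      rw [Finset.mem_erase] at hpq
      obtain ⟨hne, hmem⟩ := hpq
      rw [mem_invSet] at hmem
      obtain ⟨⟨hp1, hpn⟩, ⟨hq1, hqn⟩, hpq1, hpq2⟩ := hmem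
      have hne' : ¬(p = i ∧ q = i + 1) := by
        intro ⟨h1, h2⟩; exact hne (by rw [h1, h2])
      rw [mem_invSet]
      have hsp : s i p = if p = i then i + 1 else if p = i + 1 then i else p := s_apply i p
      have hsq : s i q = if q = i then i + 1 else if q = i + 1 then i else q := s_apply i q
      refine ⟨?_, ?_, ?_, ?_⟩
      · constructor <;> (rw [hsp]; split_ifs <;> omega)
      · constructor <;> (rw [hsq]; split_ifs <;> omega)
      · rw [hsp, hsq]; split_ifs <;> omega
      · have : (σ * s i) q < (σ * s i) p := hpq2
        simpa using this
    · rintro ⟨p, q⟩ _ ⟨p', q'⟩ _ heq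
      simp only [Prod.mk.injEq] at heq ⊢
      obtain ⟨h1, h2⟩ := heq
      constructor
      · have := congrArg (s i) h1; rwa [s_s_apply, s_s_apply] at this
      · have := congrArg (s i) h2; rwa [s_s_apply, s_s_apply] at this
  omega

lemma card_invSet_le_length {n : ℕ} : ∀ (w : List ℕ), IsExpr n w →
    (invSet n (wperm w)).card ≤ w.length := by
  intro w
  induction w with
  | nil =>
    intro _
    rw [wperm_nil, invSet_one]
    simp
  | cons i w' ih =>
    intro hw
    have hi := hw i (by simp)
    have hw' : IsExpr n w' := fun y hy => hw y (by simp [hy])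
    rw [wperm_cons]
    calc (invSet n (wperm w' * s i)).card ≤ (invSet n (wperm w')).card + 1 :=
          invStep n i (wperm w') hi.1 hi.2
      _ ≤ w'.length + 1 := by have := ih hw'; omega
      _ = (i :: w').length := by simp

lemma not_reduced_square {n : ℕ} {p q : List ℕ} {d : ℕ}
    (h : ReducedExpr n (p ++ d :: d :: q)) : False := by
  have hperm : wperm (p ++ d :: d :: q) = wperm (p ++ q) := by
    rw [wperm_append, wperm_append, wperm_cons, wperm_cons]
    rw [mul_assoc (wperm q), s_mul_self, mul_one]
  have hexpr : IsExpr n (p ++ q) := by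
    intro y hy
    apply h.1
    simp only [List.mem_append, List.mem_cons] at hy ⊢
    tauto
  have hle := card_invSet_le_length (p ++ q) hexpr
  have hlen := h.2
  rw [hperm] at hlen
  simp only [List.length_append, List.length_cons] at hlen
  simp only [List.length_append] at hle
  omega

end Part3
section Part4

variable {n : ℕ} {σ : Equiv.Perm ℕ}

lemma perm_zero_inv (h0 : σ 0 = 0) : σ⁻¹ 0 = 0 := by
  apply σ.injective
  rw [← Equiv.Perm.mul_apply, mul_inv_cancel, Equiv.Perm.one_apply, h0]

lemma perm_ge_inv (hge : ∀ x, n ≤ x → σ x = x) : ∀ x, n ≤ x → σ⁻¹ x = x := by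
  intro x hx
  apply σ.injective
  rw [← Equiv.Perm.mul_apply, mul_inv_cancel, Equiv.Perm.one_apply, hge x hx]

lemma perm_bound (h0 : σ 0 = 0) (hge : ∀ x, n ≤ x → σ x = x) :
    ∀ x, 1 ≤ x → x ≤ n - 1 → 1 ≤ σ x ∧ σ x ≤ n - 1 := by
  intro x h1 h2
  have hn : 1 ≤ n := by omega
  constructor
  · rcases Nat.eq_zero_or_pos (σ x) with hz | hp
    · exfalso
      have : x = 0 := σ.injective (by rw [hz, h0])
      omega
    · exact hp
  · by_contra hc
    push_neg at hc
    have hgen : n ≤ σ x := by omega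
    have : σ (σ x) = σ x := hge _ hgen
    have := σ.injective this
    omega

lemma invSet_snd_le (h0 : σ 0 = 0) (hge : ∀ x, n ≤ x → σ x = x) (hn : 1 ≤ n) :
    ∀ p q : ℕ, (p, q) ∈ invSet n σ → p ≤ n - 1 ∧ q ≤ n - 1 := by
  intro p q hm
  rw [mem_invSet] at hm
  obtain ⟨⟨hp1, hpn⟩, ⟨hq1, hqn⟩, hlt, hinv⟩ := hm
  have hq : q ≤ n - 1 := by
    by_contra hc
    have : q = n := by omega
    subst this
    have hσq : σ q = q := hge q le_rfl
    have hσp := perm_bound h0 hge p hp1 (by omega)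
    omega
  exact ⟨by omega, hq⟩

lemma invSet_pred (h0 : σ 0 = 0) (hge : ∀ x, n ≤ x → σ x = x) (hn : 1 ≤ n) :
    invSet n σ = invSet (n - 1) σ := by
  ext ⟨p, q⟩
  rw [mem_invSet, mem_invSet]
  constructor
  · rintro ⟨⟨hp1, hpn⟩, ⟨hq1, hqn⟩, hlt, hinv⟩
    have := invSet_snd_le h0 hge hn p q (mem_invSet.mpr ⟨⟨hp1, hpn⟩, ⟨hq1, hqn⟩, hlt, hinv⟩)
    exact ⟨⟨hp1, this.1⟩, ⟨hq1, this.2⟩, hlt, hinv⟩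
  · rintro ⟨⟨hp1, hpn⟩, ⟨hq1, hqn⟩, hlt, hinv⟩
    exact ⟨⟨hp1, by omega⟩, ⟨hq1, by omega⟩, hlt, hinv⟩

lemma card_filter_ge (h0 : σ 0 = 0) (hge : ∀ x, n ≤ x → σ x = x) {m : ℕ}
    (hm : 1 ≤ m) (hmn : m ≤ n) :
    ((Finset.Icc 1 (n - 1)).filter (fun p => m ≤ σ p)).card = n - m := by
  have h0' := perm_zero_inv h0
  have hge' := perm_ge_inv hge
  have key : ((Finset.Icc 1 (n - 1)).filter (fun p => m ≤ σ p)).card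
      = (Finset.Icc m (n - 1)).card := by
    apply Finset.card_bij' (fun a _ => σ a) (fun b _ => σ⁻¹ b)
    · intro a ha
      simp only [Finset.mem_filter, Finset.mem_Icc] at ha
      have := perm_bound h0 hge a ha.1.1 ha.1.2
      simp only [Finset.mem_Icc]
      omega
    · intro b hb
      simp only [Finset.mem_Icc] at hb
      have hb1 : 1 ≤ b := by omega
      have := perm_bound (σ := σ⁻¹) h0' hge' b hb1 hb.2
      simp only [Finset.mem_filter, Finset.mem_Icc]
      refine ⟨⟨this.1, this.2⟩, ?_⟩
      rw [← Equiv.Perm.mul_apply, mul_inv_cancel, Equiv.Perm.one_apply]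
      exact hb.1
    · intro a _; exact σ.symm_apply_apply a
    · intro b _; exact σ.apply_symm_apply b
  rw [key, Nat.card_Icc]
  omega

lemma invSet_tau_card (h0 : σ 0 = 0) (hge : ∀ x, n ≤ x → σ x = x) {m : ℕ}
    (hm : 1 ≤ m) (hmn : m ≤ n) :
    (invSet n (wperm (sji n m) * σ)).card = (invSet n σ).card + (n - m) := by
  have hn : 1 ≤ n := by omega
  set τ := wperm (sji n m) with hτdef
  have htau : ∀ x, τ x = if x = n then m else if m ≤ x ∧ x < n then x + 1 else x :=
    wperm_sji m n hmn
  set C : Finset (ℕ × ℕ) :=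
    ((Finset.Icc 1 (n - 1)).filter (fun p => m ≤ σ p)).image (fun p => (p, n)) with hC
  have hunion : invSet n (τ * σ) = invSet n σ ∪ C := by
    ext ⟨p, q⟩
    rw [Finset.mem_union, mem_invSet]
    constructor
    · rintro ⟨⟨hp1, hpn⟩, ⟨hq1, hqn⟩, hlt, hinv⟩
      have hinv' : τ (σ q) < τ (σ p) := hinv
      by_cases hq : q = n
      · right
        have hσq : σ q = n := by rw [hq]; exact hge n le_rfl
        have hσp := perm_bound h0 hge p hp1 (by omega)
        have e1 : τ (σ q) = m := by rw [hσq, htau, if_pos rfl]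
        have e2 : τ (σ p) = if σ p = n then m else if m ≤ σ p ∧ σ p < n then σ p + 1
            else σ p := htau _
        have hmsp : m ≤ σ p := by
          by_contra hc
          rw [e1, e2] at hinv'
          split_ifs at hinv' <;> omega
        simp only [hC, Finset.mem_image, Finset.mem_filter, Finset.mem_Icc]
        exact ⟨p, ⟨⟨hp1, by omega⟩, hmsp⟩, by rw [hq]⟩
      · left
        have hqn' : q ≤ n - 1 := by omega
        have hσp := perm_bound h0 hge p hp1 (by omega)
        have hσq := perm_bound h0 hge q hq1 hqn'
        have e1 : τ (σ q) = if σ q = n then m else if m ≤ σ q ∧ σ q < n then σ q + 1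
            else σ q := htau _
        have e2 : τ (σ p) = if σ p = n then m else if m ≤ σ p ∧ σ p < n then σ p + 1
            else σ p := htau _
        rw [e1, e2] at hinv'
        rw [mem_invSet]
        refine ⟨⟨hp1, hpn⟩, ⟨hq1, hqn⟩, hlt, ?_⟩
        split_ifs at hinv' <;> omega
    · rintro (hB | hCm)
      · have hle := invSet_snd_le h0 hge hn p q hB
        rw [mem_invSet] at hB
        obtain ⟨⟨hp1, hpn⟩, ⟨hq1, hqn⟩, hlt, hinv⟩ := hB
        have hσp := perm_bound h0 hge p hp1 hle.1
        have hσq := perm_bound h0 hge q hq1 hle.2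
        refine ⟨⟨hp1, hpn⟩, ⟨hq1, hqn⟩, hlt, ?_⟩
        show τ (σ q) < τ (σ p)
        have e1 : τ (σ q) = if σ q = n then m else if m ≤ σ q ∧ σ q < n then σ q + 1
            else σ q := htau _
        have e2 : τ (σ p) = if σ p = n then m else if m ≤ σ p ∧ σ p < n then σ p + 1
            else σ p := htau _
        rw [e1, e2]
        split_ifs <;> omega
      · simp only [hC, Finset.mem_image, Finset.mem_filter, Finset.mem_Icc] at hCm
        obtain ⟨a, ⟨⟨ha1, han⟩, hma⟩, heq⟩ := hCm
        have hap : a = p := congrArg Prod.fst heq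
        have hnq : n = q := congrArg Prod.snd heq
        rw [← hap, ← hnq]
        have hσp := perm_bound h0 hge a ha1 han
        have hσn : σ n = n := hge n le_rfl
        refine ⟨⟨ha1, by omega⟩, ⟨by omega, le_rfl⟩, by omega, ?_⟩
        show τ (σ n) < τ (σ a)
        have e1 : τ (σ n) = m := by rw [hσn, htau, if_pos rfl]
        have e2 : τ (σ a) = if σ a = n then m else if m ≤ σ a ∧ σ a < n then σ a + 1
            else σ a := htau _
        rw [e1, e2]
        split_ifs <;> omega
  have hdisj : Disjoint (invSet n σ) C := by
    rw [Finset.disjoint_left]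
    rintro ⟨p, q⟩ hB hCm
    have hle := invSet_snd_le h0 hge hn p q hB
    simp only [hC, Finset.mem_image, Finset.mem_filter, Finset.mem_Icc] at hCm
    obtain ⟨a, _, heq⟩ := hCm
    have : n = q := congrArg Prod.snd heq
    omega
  have hcardC : C.card = n - m := by
    rw [hC, Finset.card_image_of_injective _ (fun a b hab => by
      simpa using congrArg Prod.fst hab)]
    exact card_filter_ge h0 hge hm hmn
  rw [hunion, Finset.card_union_of_disjoint hdisj, hcardC]

end Part4
section Part5

lemma cost_helper {c n2 L : ℕ} (h : c ≤ n2) : c + n2 * L ≤ n2 * (L + 1) :=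
  calc c + n2 * L ≤ n2 + n2 * L := Nat.add_le_add_right h _
    _ = n2 * (L + 1) := by ring

lemma extract_loop {n : ℕ} :
    ∀ (b a : List ℕ) (d : ℕ), 1 ≤ d → d ≤ n →
    (∀ y ∈ a, 1 ≤ y ∧ y ≤ n - 2) → IsExpr n b →
    ReducedExpr n (a ++ sji n d ++ b) →
    ∃ a' d', 1 ≤ d' ∧ d' ≤ d ∧ (∀ y ∈ a', 1 ≤ y ∧ y ≤ n - 2) ∧
      Rw ((n - 2) * b.length) (a ++ sji n d ++ b) (a' ++ sji n d') := by
  intro b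
  induction b with
  | nil =>
    intro a d h1 _ ha _ _
    refine ⟨a, d, h1, le_rfl, ha, ?_⟩
    simp only [List.append_nil, List.length_nil, Nat.mul_zero]
    exact Rw.refl _ _
  | cons x b' ih =>
    intro a d hd1 hdn ha hb hred
    have hx := hb x (by simp)
    have hb' : IsExpr n b' := fun y hy => hb y (by simp [hy])
    have hcons : (x :: b').length = b'.length + 1 := by simp
    rcases show x + 2 ≤ d ∨ x + 1 = d ∨ x = d ∨ (d + 1 ≤ x ∧ x + 1 ≤ n) by omega
      with hc | hc | hc | hc
    · -- case (i): commute x across the whole block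
      have hyblock : ∀ y ∈ sji n d, x + 2 ≤ y ∨ y + 2 ≤ x := by
        intro y hy
        have := mem_sji hy
        left; omega
      have hstep := Rw.congr a b' (rw_comm_block (sji n d) x hyblock)
      have e1 : a ++ (sji n d ++ [x]) ++ b' = a ++ sji n d ++ (x :: b') := by simp
      have e2 : a ++ (x :: sji n d) ++ b' = (a ++ [x]) ++ sji n d ++ b' := by simp
      rw [e1, e2] at hstep
      have hred2 := hstep.reduced hred
      have ha2 : ∀ y ∈ a ++ [x], 1 ≤ y ∧ y ≤ n - 2 := by
        intro y hy
        simp only [List.mem_append, List.mem_singleton] at hy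
        rcases hy with hy | rfl
        · exact ha y hy
        · omega
      obtain ⟨a', d', hd'1, hd'2, ha', hrw⟩ := ih (a ++ [x]) d hd1 hdn ha2 hb' hred2
      refine ⟨a', d', hd'1, hd'2, ha', ?_⟩
      refine Rw.mono ?_ (hstep.trans hrw)
      rw [hcons, sji_length]
      exact cost_helper (by omega)
    · -- case (ii): the block grows
      have hsnoc : sji n x = sji n d ++ [x] := by
        rw [show d = x + 1 by omega]
        exact sji_snoc (by omega)
      have heqw : a ++ sji n d ++ (x :: b') = a ++ sji n x ++ b' := by
        rw [hsnoc]; simp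
      rw [heqw] at hred ⊢
      obtain ⟨a', d', hd'1, hd'2, ha', hrw⟩ := ih a x (by omega) (by omega) ha hb' hred
      refine ⟨a', d', hd'1, by omega, ha', ?_⟩
      refine Rw.mono ?_ hrw
      rw [hcons]
      calc (n - 2) * b'.length ≤ (n - 2) * b'.length + (n - 2) := by omega
        _ = (n - 2) * (b'.length + 1) := by ring
    · -- case (iii): impossible, word would contain a square
      exfalso
      have hdn' : d < n := by omega
      have heqw : a ++ sji n d ++ (x :: b') = (a ++ sji n (d + 1)) ++ d :: d :: b' := by
        rw [sji_snoc hdn', hc]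
        simp
      rw [heqw] at hred
      exact not_reduced_square hred
    · -- case (iv): a crossing above the block
      obtain ⟨hdx, hxn⟩ := hc
      set P := sji n (x + 1) with hP
      set Q := sji (x - 1) d with hQ
      have hD : sji n d = P ++ [x, x - 1] ++ Q := by
        rw [sji_split (show d ≤ x + 1 by omega) (show x + 1 ≤ n by omega)]
        rw [sji_split (show d ≤ x - 1 by omega) (show x - 1 ≤ x + 1 by omega)]
        have h2 : sji (x + 1) (x - 1) = [x, x - 1] := by
          rw [sji_snoc (show x - 1 < x + 1 by omega)]
          rw [show x - 1 + 1 = x by omega, sji_single]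
          rfl
        rw [h2, List.append_assoc]
      -- step A
      have hQcomm : ∀ y ∈ Q, x + 2 ≤ y ∨ y + 2 ≤ x := by
        intro y hy
        have := mem_sji hy
        right; omega
      have hstepA := Rw.congr (a ++ P ++ [x, x - 1]) b' (rw_comm_block Q x hQcomm)
      have eA1 : (a ++ P ++ [x, x - 1]) ++ (Q ++ [x]) ++ b' = a ++ sji n d ++ (x :: b') := by
        rw [hD]; simp
      have eA2 : (a ++ P ++ [x, x - 1]) ++ (x :: Q) ++ b'
          = (a ++ P) ++ (x :: (x - 1) :: x :: (Q ++ b')) := by simp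
      rw [eA1, eA2] at hstepA
      -- step B
      have hstepB : Rw 1 ((a ++ P) ++ (x :: (x - 1) :: x :: (Q ++ b')))
          ((a ++ P) ++ ((x - 1) :: x :: (x - 1) :: (Q ++ b'))) :=
        Rw.single (Or.inl (StepI.mk (a ++ P) (Q ++ b') x (x - 1) (Or.inr (by omega))))
      -- step C
      have hPcomm : ∀ y ∈ P, (x - 1) + 2 ≤ y ∨ y + 2 ≤ x - 1 := by
        intro y hy
        have := mem_sji hy
        left; omega
      have hstepC := Rw.congr a (x :: (x - 1) :: (Q ++ b')) (rw_comm_block P (x - 1) hPcomm)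
      have eC1 : a ++ (P ++ [x - 1]) ++ (x :: (x - 1) :: (Q ++ b'))
          = (a ++ P) ++ ((x - 1) :: x :: (x - 1) :: (Q ++ b')) := by simp
      have eC2 : a ++ ((x - 1) :: P) ++ (x :: (x - 1) :: (Q ++ b'))
          = (a ++ [x - 1]) ++ sji n d ++ b' := by
        rw [hD]; simp
      rw [eC1, eC2] at hstepC
      have hsteps := (hstepA.trans hstepB).trans hstepC
      have hred2 := hsteps.reduced hred
      have ha2 : ∀ y ∈ a ++ [x - 1], 1 ≤ y ∧ y ≤ n - 2 := by
        intro y hy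
        simp only [List.mem_append, List.mem_singleton] at hy
        rcases hy with hy | rfl
        · exact ha y hy
        · omega
      obtain ⟨a', d', hd'1, hd'2, ha', hrw⟩ := ih (a ++ [x - 1]) d hd1 hdn ha2 hb' hred2
      refine ⟨a', d', hd'1, hd'2, ha', ?_⟩
      refine Rw.mono ?_ (hsteps.trans hrw)
      rw [hcons]
      have hlenP : P.length = n - (x + 1) := by rw [hP, sji_length]
      have hlenQ : Q.length = (x - 1) - d := by rw [hQ, sji_length]
      rw [hlenP, hlenQ]
      exact cost_helper (by omega)

/-- extraction: any reduced `n`-expression can be brought to the form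
`a ++ sji n (π n)` with `a` an `(n-1)`-expression. -/
lemma extract {n : ℕ} {w : List ℕ} (hn : 1 ≤ n) (hred : ReducedExpr n w) :
    ∃ a, (∀ y ∈ a, 1 ≤ y ∧ y ≤ n - 2) ∧ 1 ≤ wperm w n ∧ wperm w n ≤ n ∧
      Rw ((n - 2) * w.length) w (a ++ sji n (wperm w n)) := by
  have h0 : ([] : List ℕ) ++ sji n n ++ w = w := by simp [sji_nil le_rfl]
  obtain ⟨a, d, hd1, hdn, ha, hrw⟩ :=
    extract_loop w [] n hn le_rfl (by simp) hred.1 (by rw [h0]; exact hred)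
  rw [h0] at hrw
  have hperm := hrw.wperm_eq
  have hfixa : wperm a n = n := by
    apply wperm_fix (m := n - 1) a (fun y hy => by have := ha y hy; omega)
    right; omega
  have hd : wperm w n = d := by
    rw [hperm, wperm_append, Equiv.Perm.mul_apply, hfixa, wperm_sji_apply_top hdn]
  rw [hd]
  exact ⟨a, ha, hd1, hdn, hrw⟩

end Part5
section Part6

lemma reduced_of_extract {n m : ℕ} {w a : List ℕ} (hn : 1 ≤ n)
    (hred : ReducedExpr n w) (ha : ∀ y ∈ a, 1 ≤ y ∧ y ≤ n - 2)
    (hm1 : 1 ≤ m) (hmn : m ≤ n)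
    (hperm : wperm w = wperm (sji n m) * wperm a)
    (hlen : w.length = a.length + (n - m)) :
    ReducedExpr (n - 1) a := by
  have ha' : ∀ y ∈ a, 1 ≤ y ∧ y + 1 ≤ n - 1 := by
    intro y hy; have := ha y hy; omega
  have h0 : wperm a 0 = 0 := by
    apply wperm_fix (m := n - 1) a ha'
    left; rfl
  have hge : ∀ x, n ≤ x → wperm a x = x := by
    intro x hx
    apply wperm_fix (m := n - 1) a ha'
    right; omega
  refine ⟨ha', ?_⟩
  have hcard : (invSet n (wperm w)).card = (invSet n (wperm a)).card + (n - m) := by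
    rw [hperm]
    exact invSet_tau_card h0 hge hm1 hmn
  have hpred : invSet n (wperm a) = invSet (n - 1) (wperm a) := invSet_pred h0 hge hn
  have := hred.2
  rw [hcard, hpred] at this
  omega

lemma key : ∀ (n : ℕ), ∀ (ℓ : ℕ) (u v : List ℕ),
    ReducedExpr n u → ReducedExpr n v → u.length = ℓ → v.length = ℓ →
    wperm u = wperm v → Rw ((n - 1) * (n - 2) * ℓ) u v := by
  intro n
  induction n using Nat.strong_induction_on with
  | _ n ih =>
    intro ℓ u v hu hv hlu hlv heq
    rcases le_or_gt n 2 with hn2 | hn2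
    · -- n ≤ 2 : words of equal length with all letters 1 are equal
      have hall : ∀ w : List ℕ, IsExpr n w → w = List.replicate w.length 1 := by
        intro w hw
        apply List.eq_replicate_of_mem
        intro y hy
        have := hw y hy
        omega
      have huv : u = v := by
        rw [hall u hu.1, hall v hv.1, hlu, hlv]
      exact Rw.of_eq huv _
    · have hn1 : 1 ≤ n := by omega
      obtain ⟨au, hau, hm1, hmn, hrwu⟩ := extract hn1 hu
      obtain ⟨av, hav, _, _, hrwv⟩ := extract hn1 hv
      set m := wperm u n with hm
      have hmv : wperm v n = m := by rw [← heq]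
      rw [hmv] at hrwv
      set t := sji n m with ht
      have hσu : wperm u = wperm t * wperm au := by
        rw [hrwu.wperm_eq, wperm_append]
      have hσv : wperm v = wperm t * wperm av := by
        rw [hrwv.wperm_eq, wperm_append]
      have hlenu : u.length = au.length + (n - m) := by
        rw [hrwu.length_eq]
        simp [ht, sji_length]
      have hlenv : v.length = av.length + (n - m) := by
        rw [hrwv.length_eq]
        simp [ht, sji_length]
      have hredu : ReducedExpr (n - 1) au :=
        reduced_of_extract hn1 hu hau hm1 hmn hσu hlenu
      have hredv : ReducedExpr (n - 1) av :=
        reduced_of_extract hn1 hv hav hm1 hmn hσv hlenv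
      have hperm_av : wperm au = wperm av := by
        have h1 : wperm t * wperm au = wperm t * wperm av := by
          rw [← hσu, ← hσv, heq]
        exact mul_left_cancel h1
      have hlav : av.length = au.length := by omega
      have hIH := ih (n - 1) (by omega) au.length au av hredu hredv rfl hlav hperm_av
      have hmid := Rw.congr [] t hIH
      simp only [List.nil_append] at hmid
      have htotal := (hrwu.trans hmid).trans hrwv.symm
      refine Rw.mono ?_ htotal
      -- arithmetic
      obtain ⟨k, rfl⟩ : ∃ k, n = k + 3 := ⟨n - 3, by omega⟩
      have e1 : k + 3 - 2 = k + 1 := by omega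
      have e2 : k + 3 - 1 - 1 = k + 1 := by omega
      have e3 : k + 3 - 1 - 2 = k := by omega
      have e4 : k + 3 - 1 = k + 2 := by omega
      rw [e1, e2, e3, e4, hlu, hlv]
      have hll : au.length ≤ ℓ := by omega
      have h1 : (k + 1) * k * au.length ≤ (k + 1) * k * ℓ :=
        Nat.mul_le_mul_left _ hll
      nlinarith [h1]

end Part6


/-- For all equivalent reduced `n`-expressions `u, v` of length `ℓ`,
`dist(u,v) ≤ (n-1)(n-2)ℓ`. -/
theorem dist_le_of_reduced (n ℓ : ℕ) (u v : List ℕ)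
    (hu : ReducedExpr n u) (hv : ReducedExpr n v)
    (hlu : u.length = ℓ) (hlv : v.length = ℓ)
    (heq : wperm u = wperm v) :
    dist u v ≤ (n - 1) * (n - 2) * ℓ :=
  dist_le_of_rw (key n ℓ u v hu hv hlu hlv heq)

end
end

section
/- Applying a single braid relation of type s_i s_{i+1} s_i = s_{i+1} s_i s_{i+1} to a reduced n-expression u, yielding v, gives I₃(S(u),S(v)) = 1 and I₂,₂(S(u),S(v)) = 0; applying a single commutation s_i s_j = s_j s_i with |i-j| ≥ 2 gives I₃(S(u),S(v)) = 0 and I₂,₂(S(u),S(v)) = 1. -/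
open scoped Classical

noncomputable section

lemma wperm_lt (n : ℕ) {w : List ℕ} (hw : IsExpr n w) (x : ℕ) :
    (1 ≤ wperm w x ∧ wperm w x ≤ n) ↔ (1 ≤ x ∧ x ≤ n) := by
  induction w generalizing x with
  | nil => simp [wperm_nil]
  | cons i rest ih =>
    have hi := hw i (by simp)
    have hr : IsExpr n rest := fun j hj => hw j (by simp [hj])
    rw [wperm_cons]
    have h2 : (wperm rest * s i) x = wperm rest (s i x) := rfl
    rw [h2, ih hr (s i x), s_apply]
    split_ifs <;> omega

lemma wperm_inv_mem (n : ℕ) {w : List ℕ} (hw : IsExpr n w) {x : ℕ}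
    (hx : 1 ≤ x ∧ x ≤ n) : 1 ≤ (wperm w)⁻¹ x ∧ (wperm w)⁻¹ x ≤ n := by
  have h := wperm_lt n hw ((wperm w)⁻¹ x)
  rw [← Equiv.Perm.mul_apply, mul_inv_cancel, Equiv.Perm.one_apply] at h
  exact h.mp hx

lemma namesAux_append (π : Equiv.Perm ℕ) (w1 w2 : List ℕ) :
    namesAux π (w1 ++ w2) = namesAux π w1 ++ namesAux (wperm w1 * π) w2 := by
  induction w1 generalizing π with
  | nil => simp [namesAux, wperm_nil]
  | cons i rest ih =>
    show _ :: namesAux (s i * π) (rest ++ w2) = _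
    rw [ih (s i * π), wperm_cons, mul_assoc]
    rfl

lemma namesAux_length (π : Equiv.Perm ℕ) (w : List ℕ) :
    (namesAux π w).length = w.length := by
  induction w generalizing π with
  | nil => rfl
  | cons i rest ih => simp [namesAux, ih]

lemma mem_namesAux {w : List ℕ} (π : Equiv.Perm ℕ) {p q : ℕ}
    (h1 : π p < π q) (h2 : (wperm w * π) q < (wperm w * π) p) :
    ({p, q} : Finset ℕ) ∈ namesAux π w := by
  induction w generalizing π with
  | nil => simp only [wperm_nil, one_mul] at h2; omega
  | cons i rest ih =>
    rw [wperm_cons, mul_assoc] at h2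
    by_cases hc : π p = i ∧ π q = i + 1
    · have hp : p = π⁻¹ i := by rw [← hc.1, ← Equiv.Perm.mul_apply, inv_mul_cancel, Equiv.Perm.one_apply]
      have hq : q = π⁻¹ (i + 1) := by rw [← hc.2, ← Equiv.Perm.mul_apply, inv_mul_cancel, Equiv.Perm.one_apply]
      simp [namesAux, hp, hq]
    · have h3 : (s i * π) p < (s i * π) q := by
        have e1 : (s i * π) p = s i (π p) := rfl
        have e2 : (s i * π) q = s i (π q) := rfl
        rw [e1, e2, s_apply, s_apply]
        split_ifs <;> omega
      exact List.mem_cons_of_mem _ (ih (s i * π) h3 h2)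

lemma nodup_names {n : ℕ} {u : List ℕ} (hu : ReducedExpr n u) : (names u).Nodup := by
  obtain ⟨hexpr, hlen⟩ := hu
  have hsub : (invSet n (wperm u)).image (fun pq => ({pq.1, pq.2} : Finset ℕ))
      ⊆ (names u).toFinset := by
    intro t ht
    simp only [Finset.mem_image] at ht
    obtain ⟨⟨p, q⟩, hpq, rfl⟩ := ht
    simp only [invSet, Finset.mem_filter] at hpq
    rw [List.mem_toFinset]
    have h1 : (1 : Equiv.Perm ℕ) p < (1 : Equiv.Perm ℕ) q := hpq.2.1
    have h2 : (wperm u * 1) q < (wperm u * 1) p := by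
      simpa using hpq.2.2
    exact mem_namesAux 1 h1 h2
  have hinj : Set.InjOn (fun pq : ℕ × ℕ => ({pq.1, pq.2} : Finset ℕ)) (invSet n (wperm u)) := by
    intro ⟨p, q⟩ hp ⟨p', q'⟩ hq he
    simp only [invSet, Finset.mem_coe, Finset.mem_filter] at hp hq
    simp only at he
    have h1 : p ∈ ({p', q'} : Finset ℕ) := he ▸ (by simp)
    have h2 : q ∈ ({p', q'} : Finset ℕ) := he ▸ (by simp)
    have h3 : p' ∈ ({p, q} : Finset ℕ) := he.symm ▸ (by simp)
    simp only [Finset.mem_insert, Finset.mem_singleton] at h1 h2 h3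
    have : p = p' ∧ q = q' := by omega
    simp [this.1, this.2]
  have hcard : (invSet n (wperm u)).card ≤ (names u).toFinset.card :=
    le_trans (le_of_eq (Finset.card_image_of_injOn hinj).symm) (Finset.card_le_card hsub)
  have hlen2 : (names u).length = u.length := namesAux_length 1 u
  have hle : (names u).toFinset.card ≤ (names u).length := (names u).toFinset_card_le
  have heq : (names u).dedup.length = (names u).length := by
    have := (names u).card_toFinset
    omega
  have := List.Sublist.eq_of_length ((names u).dedup_sublist) heq
  rw [← this]
  exact (names u).nodup_dedup

lemma not_sameOrder_mem {A M M' T : List (Finset ℕ)} (hlen : M.length = M'.length)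
    (hmem : ∀ x, x ∈ M ↔ x ∈ M') (hnd : (A ++ (M ++ T)).Nodup) {a b : Finset ℕ}
    (h : ¬ sameOrder (A ++ (M ++ T)) (A ++ (M' ++ T)) a b) :
    a ∈ M ∧ b ∈ M ∧ a ≠ b := by
  set S := A ++ (M ++ T) with hS
  set S' := A ++ (M' ++ T) with hS'
  have key : ∀ c, c ∉ M → S.idxOf c = S'.idxOf c ∧
      (S.idxOf c < A.length ∨ A.length + M.length ≤ S.idxOf c) := by
    intro c hc
    by_cases hcA : c ∈ A
    · rw [hS, hS', List.idxOf_append_of_mem hcA, List.idxOf_append_of_mem hcA]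
      exact ⟨rfl, Or.inl (List.idxOf_lt_length_iff.mpr hcA)⟩
    · have hc' : c ∉ M' := fun hx => hc ((hmem c).mpr hx)
      rw [hS, hS', List.idxOf_append_of_notMem hcA, List.idxOf_append_of_notMem hcA,
        List.idxOf_append_of_notMem hc, List.idxOf_append_of_notMem hc', hlen]
      exact ⟨rfl, Or.inr (by omega)⟩
  have key2 : ∀ c, c ∈ M → A.length ≤ S.idxOf c ∧ S.idxOf c < A.length + M.length ∧
      A.length ≤ S'.idxOf c ∧ S'.idxOf c < A.length + M.length := by
    intro c hc
    have hcA : c ∉ A := by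
      rcases List.nodup_append.mp hnd with ⟨-, -, hdisj⟩
      exact fun hx => hdisj c hx c (by simp [hc]) rfl
    have hc' : c ∈ M' := (hmem c).mp hc
    rw [hS, hS', List.idxOf_append_of_notMem hcA, List.idxOf_append_of_notMem hcA,
      List.idxOf_append_of_mem hc, List.idxOf_append_of_mem hc']
    have h1 := List.idxOf_lt_length_iff.mpr hc
    have h2 := List.idxOf_lt_length_iff.mpr hc'
    omega
  by_cases haM : a ∈ M
  · by_cases hbM : b ∈ M
    · refine ⟨haM, hbM, ?_⟩
      rintro rfl
      exact h (by rw [sameOrder]; omega)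
    · exfalso
      obtain ⟨he, hr⟩ := key b hbM
      obtain ⟨l1, l2, l3, l4⟩ := key2 a haM
      exact h (by rw [sameOrder, ← he]; omega)
  · exfalso
    obtain ⟨he, hr⟩ := key a haM
    by_cases hbM : b ∈ M
    · obtain ⟨l1, l2, l3, l4⟩ := key2 b hbM
      exact h (by rw [sameOrder, ← he]; omega)
    · obtain ⟨he2, _⟩ := key b hbM
      exact h (by rw [sameOrder, ← he, ← he2])

lemma sameOrder_comm {S S' : List (Finset ℕ)} {a b : Finset ℕ} :
    sameOrder S S' a b ↔ sameOrder S' S a b := ⟨Iff.symm, Iff.symm⟩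

lemma I3_comm (n : ℕ) (S S' : List (Finset ℕ)) : I3 n S S' = I3 n S' S := by
  unfold I3
  congr 1
  apply Finset.filter_congr
  intro t _
  constructor
  · intro h hc; exact h (fun a ha b hb => sameOrder_comm.mpr (hc a ha b hb))
  · intro h hc; exact h (fun a ha b hb => sameOrder_comm.mp (hc a ha b hb))

lemma I22_comm (n : ℕ) (S S' : List (Finset ℕ)) : I22 n S S' = I22 n S' S := by
  unfold I22
  congr 1
  apply Finset.filter_congr
  intro t _
  constructor
  · rintro ⟨h1, h2⟩
    exact ⟨h1, fun hc => h2 (fun a ha b hb => sameOrder_comm.mpr (hc a ha b hb))⟩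
  · rintro ⟨h1, h2⟩
    exact ⟨h1, fun hc => h2 (fun a ha b hb => sameOrder_comm.mp (hc a ha b hb))⟩

lemma stepI_counts (n : ℕ) (A T : List (Finset ℕ)) (P Q R : ℕ)
    (hP : P ∈ Finset.Icc 1 n) (hQ : Q ∈ Finset.Icc 1 n) (hR : R ∈ Finset.Icc 1 n)
    (hPQ : P ≠ Q) (hPR : P ≠ R) (hQR : Q ≠ R)
    (hnd : (A ++ ([{P,Q}, {P,R}, {Q,R}] ++ T) : List (Finset ℕ)).Nodup) :
    I3 n (A ++ ([{P,Q}, {P,R}, {Q,R}] ++ T)) (A ++ ([{Q,R}, {P,R}, {P,Q}] ++ T)) = 1 ∧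
    I22 n (A ++ ([{P,Q}, {P,R}, {Q,R}] ++ T)) (A ++ ([{Q,R}, {P,R}, {P,Q}] ++ T)) = 0 := by
  set X : Finset ℕ := {P, Q} with hX
  set Y : Finset ℕ := {P, R} with hY
  set Z : Finset ℕ := {Q, R} with hZ
  set S := A ++ ([X, Y, Z] ++ T) with hS
  set S' := A ++ ([Z, Y, X] ++ T) with hS'
  have hPX : P ∈ X := by simp [hX]
  have hQX : Q ∈ X := by simp [hX]
  have hPY : P ∈ Y := by simp [hY]
  have hRY : R ∈ Y := by simp [hY]
  have hQZ : Q ∈ Z := by simp [hZ]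
  have hRZ : R ∈ Z := by simp [hZ]
  have hQY : Q ∉ Y := by simp [hY]; omega
  have hPZ : P ∉ Z := by simp [hZ]; omega
  have hRX : R ∉ X := by simp [hX]; omega
  have hXY : X ≠ Y := fun h => hQY (h ▸ hQX)
  have hXZ : X ≠ Z := fun h => hPZ (h ▸ hPX)
  have hYZ : Y ≠ Z := fun h => hPZ (h ▸ hPY)
  have hdisjA : ∀ c ∈ ([X, Y, Z] : List (Finset ℕ)), c ∉ A := by
    rcases List.nodup_append.mp hnd with ⟨-, -, hdisj⟩
    intro c hc hcA
    exact hdisj c hcA c (List.mem_append_left _ hc) rfl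
  have hXA : X ∉ A := hdisjA X (by simp)
  have hYA : Y ∉ A := hdisjA Y (by simp)
  have hZA : Z ∉ A := hdisjA Z (by simp)
  -- index computations
  have idxX : S.idxOf X = A.length := by
    rw [hS, List.idxOf_append_of_notMem hXA]
    simp [List.idxOf_cons_self]
  have idxY : S.idxOf Y = A.length + 1 := by
    rw [hS, List.idxOf_append_of_notMem hYA]
    show A.length + List.idxOf Y (X :: Y :: Z :: T) = A.length + 1
    rw [List.idxOf_cons_ne _ hXY, List.idxOf_cons_self]
    all_goals omega
  have idxZ : S.idxOf Z = A.length + 2 := by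
    rw [hS, List.idxOf_append_of_notMem hZA]
    show A.length + List.idxOf Z (X :: Y :: Z :: T) = A.length + 2
    rw [List.idxOf_cons_ne _ hXZ, List.idxOf_cons_ne _ hYZ, List.idxOf_cons_self]
    all_goals omega
  have idxX' : S'.idxOf X = A.length + 2 := by
    rw [hS', List.idxOf_append_of_notMem hXA]
    show A.length + List.idxOf X (Z :: Y :: X :: T) = A.length + 2
    rw [List.idxOf_cons_ne _ hXZ.symm, List.idxOf_cons_ne _ hXY.symm, List.idxOf_cons_self]
    all_goals omega
  have idxY' : S'.idxOf Y = A.length + 1 := by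
    rw [hS', List.idxOf_append_of_notMem hYA]
    show A.length + List.idxOf Y (Z :: Y :: X :: T) = A.length + 1
    rw [List.idxOf_cons_ne _ hYZ.symm, List.idxOf_cons_self]
    all_goals omega
  have idxZ' : S'.idxOf Z = A.length := by
    rw [hS', List.idxOf_append_of_notMem hZA]
    show A.length + List.idxOf Z (Z :: Y :: X :: T) = A.length
    rw [List.idxOf_cons_self]
    all_goals omega
  have hflip : ∀ a ∈ ([X, Y, Z] : List (Finset ℕ)), ∀ b ∈ ([X, Y, Z] : List (Finset ℕ)),
      a ≠ b → ¬ sameOrder S S' a b := by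
    intro a ha b hb hab hso
    rw [sameOrder] at hso
    simp only [List.mem_cons, List.mem_singleton, List.not_mem_nil, or_false] at ha hb
    rcases ha with rfl | rfl | rfl <;> rcases hb with rfl | rfl | rfl <;>
      first
        | exact hab rfl
        | (rw [idxX, idxY, idxX', idxY'] at hso; omega)
        | (rw [idxX, idxZ, idxX', idxZ'] at hso; omega)
        | (rw [idxY, idxZ, idxY', idxZ'] at hso; omega)
        | (rw [idxY, idxX, idxY', idxX'] at hso; omega)
        | (rw [idxZ, idxX, idxZ', idxX'] at hso; omega)
        | (rw [idxZ, idxY, idxZ', idxY'] at hso; omega)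
  have hnot : ∀ a b : Finset ℕ, ¬ sameOrder S S' a b →
      a ∈ ([X, Y, Z] : List (Finset ℕ)) ∧ b ∈ ([X, Y, Z] : List (Finset ℕ)) ∧ a ≠ b := by
    intro a b h
    exact not_sameOrder_mem (by simp) (fun x => by simp; tauto) hnd h
  constructor
  · -- I3 = 1
    have hfilter : (((Finset.Icc 1 n).powersetCard 3).filter (fun t =>
        ¬ ∀ a ∈ t.powersetCard 2, ∀ b ∈ t.powersetCard 2, sameOrder S S' a b))
        = {({P, Q, R} : Finset ℕ)} := by
      ext t
      simp only [Finset.mem_filter, Finset.mem_powersetCard, Finset.mem_singleton]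
      constructor
      · rintro ⟨⟨hsub, hcard⟩, hcond⟩
        push_neg at hcond
        obtain ⟨a, ha, b, hb, hab⟩ := hcond
        obtain ⟨haM, hbM, hne⟩ := hnot a b hab
        have hPt : P ∈ t ∧ Q ∈ t ∧ R ∈ t := by
          simp only [List.mem_cons, List.mem_singleton, List.not_mem_nil, or_false] at haM hbM
          rcases haM with rfl | rfl | rfl <;> rcases hbM with rfl | rfl | rfl <;>
            first
              | exact absurd rfl hne
              | exact ⟨ha.1 hPX, ⟨ha.1 hQX, hb.1 hRY⟩⟩
              | exact ⟨ha.1 hPX, ⟨ha.1 hQX, hb.1 hRZ⟩⟩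
              | exact ⟨ha.1 hPY, ⟨hb.1 hQX, ha.1 hRY⟩⟩
              | exact ⟨ha.1 hPY, ⟨hb.1 hQZ, ha.1 hRY⟩⟩
              | exact ⟨hb.1 hPX, ⟨ha.1 hQZ, ha.1 hRZ⟩⟩
              | exact ⟨hb.1 hPY, ⟨ha.1 hQZ, ha.1 hRZ⟩⟩
        have hsub2 : ({P, Q, R} : Finset ℕ) ⊆ t := by
          intro x hx
          simp only [Finset.mem_insert, Finset.mem_singleton] at hx
          rcases hx with rfl | rfl | rfl
          · exact hPt.1
          · exact hPt.2.1
          · exact hPt.2.2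
        exact (Finset.eq_of_subset_of_card_le hsub2 (by
          rw [hcard]
          rw [Finset.card_insert_of_notMem (by simp [hPQ, hPR]),
            Finset.card_insert_of_notMem (by simp [hQR]), Finset.card_singleton])).symm
      · rintro rfl
        refine ⟨⟨?_, ?_⟩, ?_⟩
        · intro x hx
          simp only [Finset.mem_insert, Finset.mem_singleton] at hx
          rcases hx with rfl | rfl | rfl
          exacts [hP, hQ, hR]
        · rw [Finset.card_insert_of_notMem (by simp [hPQ, hPR]),
            Finset.card_insert_of_notMem (by simp [hQR]), Finset.card_singleton]
        · intro hall
          refine hflip X (by simp) Y (by simp) hXY (hall X ⟨?_, ?_⟩ Y ⟨?_, ?_⟩)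
          · intro x hx
            simp only [hX, Finset.mem_insert, Finset.mem_singleton] at hx
            rcases hx with rfl | rfl <;> simp
          · rw [hX, Finset.card_insert_of_notMem (by simp [hPQ]), Finset.card_singleton]
          · intro x hx
            simp only [hY, Finset.mem_insert, Finset.mem_singleton] at hx
            rcases hx with rfl | rfl <;> simp
          · rw [hY, Finset.card_insert_of_notMem (by simp [hPR]), Finset.card_singleton]
    rw [I3, hfilter, Finset.card_singleton]
  · -- I22 = 0
    rw [I22, Finset.card_eq_zero]
    ext W
    simp only [Finset.mem_filter, Finset.notMem_empty, iff_false]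
    rintro ⟨-, hdisj, hcond⟩
    push_neg at hcond
    obtain ⟨a, ha, b, hb, hab⟩ := hcond
    obtain ⟨haM, hbM, hne⟩ := hnot a b hab
    have hd := hdisj a ha b hb hne
    simp only [List.mem_cons, List.mem_singleton, List.not_mem_nil, or_false] at haM hbM
    rcases haM with rfl | rfl | rfl <;> rcases hbM with rfl | rfl | rfl <;>
      first
        | exact absurd rfl hne
        | exact (Finset.disjoint_left.mp hd hPX) hPY
        | exact (Finset.disjoint_left.mp hd hPY) hPX
        | exact (Finset.disjoint_left.mp hd hQX) hQZ
        | exact (Finset.disjoint_left.mp hd hQZ) hQX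
        | exact (Finset.disjoint_left.mp hd hRY) hRZ
        | exact (Finset.disjoint_left.mp hd hRZ) hRY

lemma stepII_counts (n : ℕ) (A T : List (Finset ℕ)) (P Q P' Q' : ℕ)
    (hP : P ∈ Finset.Icc 1 n) (hQ : Q ∈ Finset.Icc 1 n)
    (hP' : P' ∈ Finset.Icc 1 n) (hQ' : Q' ∈ Finset.Icc 1 n)
    (h1 : P ≠ Q) (h2 : P ≠ P') (h3 : P ≠ Q') (h4 : Q ≠ P') (h5 : Q ≠ Q') (h6 : P' ≠ Q')
    (hnd : (A ++ ([{P,Q}, {P',Q'}] ++ T) : List (Finset ℕ)).Nodup) :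
    I3 n (A ++ ([{P,Q}, {P',Q'}] ++ T)) (A ++ ([{P',Q'}, {P,Q}] ++ T)) = 0 ∧
    I22 n (A ++ ([{P,Q}, {P',Q'}] ++ T)) (A ++ ([{P',Q'}, {P,Q}] ++ T)) = 1 := by
  set X : Finset ℕ := {P, Q} with hX
  set Y : Finset ℕ := {P', Q'} with hY
  set S := A ++ ([X, Y] ++ T) with hS
  set S' := A ++ ([Y, X] ++ T) with hS'
  have hPX : P ∈ X := by simp [hX]
  have hQX : Q ∈ X := by simp [hX]
  have hPY : P' ∈ Y := by simp [hY]
  have hQY : Q' ∈ Y := by simp [hY]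
  have hPnY : P ∉ Y := by simp [hY]; omega
  have hXY : X ≠ Y := fun h => hPnY (h ▸ hPX)
  have hdisjXY : Disjoint X Y := by
    rw [Finset.disjoint_left]
    intro x hx hy
    simp only [hX, hY, Finset.mem_insert, Finset.mem_singleton] at hx hy
    omega
  have hdisjA : ∀ c ∈ ([X, Y] : List (Finset ℕ)), c ∉ A := by
    rcases List.nodup_append.mp hnd with ⟨-, -, hdisj⟩
    intro c hc hcA
    exact hdisj c hcA c (List.mem_append_left _ hc) rfl
  have hXA : X ∉ A := hdisjA X (by simp)
  have hYA : Y ∉ A := hdisjA Y (by simp)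
  have idxX : S.idxOf X = A.length := by
    rw [hS, List.idxOf_append_of_notMem hXA]
    show A.length + List.idxOf X (X :: Y :: T) = A.length
    rw [List.idxOf_cons_self]
    all_goals omega
  have idxY : S.idxOf Y = A.length + 1 := by
    rw [hS, List.idxOf_append_of_notMem hYA]
    show A.length + List.idxOf Y (X :: Y :: T) = A.length + 1
    rw [List.idxOf_cons_ne _ hXY, List.idxOf_cons_self]
    all_goals omega
  have idxX' : S'.idxOf X = A.length + 1 := by
    rw [hS', List.idxOf_append_of_notMem hXA]
    show A.length + List.idxOf X (Y :: X :: T) = A.length + 1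
    rw [List.idxOf_cons_ne _ hXY.symm, List.idxOf_cons_self]
    all_goals omega
  have idxY' : S'.idxOf Y = A.length := by
    rw [hS', List.idxOf_append_of_notMem hYA]
    show A.length + List.idxOf Y (Y :: X :: T) = A.length
    rw [List.idxOf_cons_self]
    all_goals omega
  have hnot : ∀ a b : Finset ℕ, ¬ sameOrder S S' a b →
      a ∈ ([X, Y] : List (Finset ℕ)) ∧ b ∈ ([X, Y] : List (Finset ℕ)) ∧ a ≠ b := by
    intro a b h
    exact not_sameOrder_mem (by simp) (fun x => by simp; tauto) hnd h
  have hcardX : X.card = 2 := by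
    rw [hX, Finset.card_insert_of_notMem (by simp [h1]), Finset.card_singleton]
  have hcardY : Y.card = 2 := by
    rw [hY, Finset.card_insert_of_notMem (by simp [h6]), Finset.card_singleton]
  constructor
  · -- I3 = 0
    rw [I3, Finset.card_eq_zero]
    ext t
    simp only [Finset.mem_filter, Finset.notMem_empty, iff_false]
    rintro ⟨ht, hcond⟩
    rw [Finset.mem_powersetCard] at ht
    push_neg at hcond
    obtain ⟨a, ha, b, hb, hab⟩ := hcond
    rw [Finset.mem_powersetCard] at ha hb
    obtain ⟨haM, hbM, hne⟩ := hnot a b hab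
    simp only [List.mem_cons, List.mem_singleton, List.not_mem_nil, or_false] at haM hbM
    have hsub : X ⊆ t ∧ Y ⊆ t := by
      rcases haM with rfl | rfl <;> rcases hbM with rfl | rfl
      · exact absurd rfl hne
      · exact ⟨ha.1, hb.1⟩
      · exact ⟨hb.1, ha.1⟩
      · exact absurd rfl hne
    have : (X ∪ Y).card ≤ t.card := Finset.card_le_card (Finset.union_subset hsub.1 hsub.2)
    rw [Finset.card_union_of_disjoint hdisjXY, hcardX, hcardY, ht.2] at this
    omega
  · -- I22 = 1
    have hfilter : ((((Finset.Icc 1 n).powersetCard 2).powersetCard 2).filter (fun W =>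
        (∀ a ∈ W, ∀ b ∈ W, a ≠ b → Disjoint a b) ∧
        ¬ ∀ a ∈ W, ∀ b ∈ W, sameOrder S S' a b)) = {({X, Y} : Finset (Finset ℕ))} := by
      ext W
      simp only [Finset.mem_filter, Finset.mem_singleton]
      constructor
      · rintro ⟨hW, -, hcond⟩
        push_neg at hcond
        obtain ⟨a, ha, b, hb, hab⟩ := hcond
        obtain ⟨haM, hbM, hne⟩ := hnot a b hab
        simp only [List.mem_cons, List.mem_singleton, List.not_mem_nil, or_false] at haM hbM
        rw [Finset.mem_powersetCard] at hW
        have hsub : ({X, Y} : Finset (Finset ℕ)) ⊆ W := by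
          intro c hc
          simp only [Finset.mem_insert, Finset.mem_singleton] at hc
          rcases haM with rfl | rfl <;> rcases hbM with rfl | rfl <;>
            first
              | exact absurd rfl hne
              | (rcases hc with rfl | rfl; exacts [ha, hb])
              | (rcases hc with rfl | rfl; exacts [hb, ha])
        exact (Finset.eq_of_subset_of_card_le hsub (by
          rw [hW.2, Finset.card_insert_of_notMem (by simp [hXY]), Finset.card_singleton])).symm
      · rintro rfl
        refine ⟨?_, ?_, ?_⟩
        · rw [Finset.mem_powersetCard]
          constructor
          · intro c hc
            simp only [Finset.mem_insert, Finset.mem_singleton] at hc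
            rw [Finset.mem_powersetCard]
            rcases hc with rfl | rfl
            · refine ⟨?_, hcardX⟩
              intro x hx
              simp only [hX, Finset.mem_insert, Finset.mem_singleton] at hx
              rcases hx with rfl | rfl
              exacts [hP, hQ]
            · refine ⟨?_, hcardY⟩
              intro x hx
              simp only [hY, Finset.mem_insert, Finset.mem_singleton] at hx
              rcases hx with rfl | rfl
              exacts [hP', hQ']
          · rw [Finset.card_insert_of_notMem (by simp [hXY]), Finset.card_singleton]
        · intro a ha b hb hab
          simp only [Finset.mem_insert, Finset.mem_singleton] at ha hb
          rcases ha with rfl | rfl <;> rcases hb with rfl | rfl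
          · exact absurd rfl hab
          · exact hdisjXY
          · exact hdisjXY.symm
          · exact absurd rfl hab
        · intro hall
          have := hall X (by simp) Y (by simp)
          rw [sameOrder, idxX, idxY, idxX', idxY'] at this
          omega
    rw [I22, hfilter, Finset.card_singleton]

lemma inv_mul_apply (σ : Equiv.Perm ℕ) (j x : ℕ) : (s j * σ)⁻¹ x = σ⁻¹ (s j x) := by
  rw [mul_inv_rev, Equiv.Perm.mul_apply, s, Equiv.swap_inv]

set_option maxHeartbeats 1600000 in
lemma wperm_braid (i : ℕ) : wperm [i, i+1, i] = wperm [i+1, i, i+1] := by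
  apply Equiv.ext
  intro x
  rw [wperm_cons, wperm_cons, wperm_cons, wperm_nil, wperm_cons, wperm_cons, wperm_cons,
    wperm_nil]
  simp only [one_mul, Equiv.Perm.mul_apply, s_apply]
  split_ifs <;> omega

set_option maxHeartbeats 800000 in
lemma wperm_comm {i j : ℕ} (h : i + 2 ≤ j ∨ j + 2 ≤ i) : wperm [i, j] = wperm [j, i] := by
  apply Equiv.ext
  intro x
  rw [wperm_cons, wperm_cons, wperm_nil, wperm_cons, wperm_cons, wperm_nil]
  simp only [one_mul, Equiv.Perm.mul_apply, s_apply]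
  split_ifs <;> omega

lemma namesAux_braid1 (π : Equiv.Perm ℕ) (i : ℕ) :
    namesAux π [i, i+1, i] =
      [{π⁻¹ i, π⁻¹ (i+1)}, {π⁻¹ i, π⁻¹ (i+2)}, {π⁻¹ (i+1), π⁻¹ (i+2)}] := by
  have e2a : (s i * π)⁻¹ (i+1) = π⁻¹ i := by
    rw [inv_mul_apply]; congr 1; rw [s_apply]; split_ifs <;> omega
  have e2b : (s i * π)⁻¹ (i+1+1) = π⁻¹ (i+2) := by
    rw [inv_mul_apply]; congr 1; rw [s_apply]; split_ifs <;> omega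
  have e3a : (s (i+1) * (s i * π))⁻¹ i = π⁻¹ (i+1) := by
    rw [inv_mul_apply, inv_mul_apply]; congr 1; rw [s_apply, s_apply]; split_ifs <;> omega
  have e3b : (s (i+1) * (s i * π))⁻¹ (i+1) = π⁻¹ (i+2) := by
    rw [inv_mul_apply, inv_mul_apply]; congr 1; rw [s_apply, s_apply]; split_ifs <;> omega
  simp only [namesAux]
  rw [e2a, e2b, e3a, e3b]

lemma namesAux_braid2 (π : Equiv.Perm ℕ) (i : ℕ) :
    namesAux π [i+1, i, i+1] =
      [{π⁻¹ (i+1), π⁻¹ (i+2)}, {π⁻¹ i, π⁻¹ (i+2)}, {π⁻¹ i, π⁻¹ (i+1)}] := by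
  have e2a : (s (i+1) * π)⁻¹ i = π⁻¹ i := by
    rw [inv_mul_apply]; congr 1; rw [s_apply]; split_ifs <;> omega
  have e2b : (s (i+1) * π)⁻¹ (i+1) = π⁻¹ (i+2) := by
    rw [inv_mul_apply]; congr 1; rw [s_apply]; split_ifs <;> omega
  have e3a : (s i * (s (i+1) * π))⁻¹ (i+1) = π⁻¹ i := by
    rw [inv_mul_apply, inv_mul_apply]; congr 1; rw [s_apply, s_apply]; split_ifs <;> omega
  have e3b : (s i * (s (i+1) * π))⁻¹ (i+1+1) = π⁻¹ (i+1) := by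
    rw [inv_mul_apply, inv_mul_apply]; congr 1; rw [s_apply, s_apply]; split_ifs <;> omega
  simp only [namesAux]
  rw [e2a, e2b, e3a, e3b]

lemma namesAux_comm2 (π : Equiv.Perm ℕ) {i j : ℕ} (h : i + 2 ≤ j ∨ j + 2 ≤ i) :
    namesAux π [i, j] = [{π⁻¹ i, π⁻¹ (i+1)}, {π⁻¹ j, π⁻¹ (j+1)}] := by
  have e2a : (s i * π)⁻¹ j = π⁻¹ j := by
    rw [inv_mul_apply]; congr 1; rw [s_apply]; split_ifs <;> omega
  have e2b : (s i * π)⁻¹ (j+1) = π⁻¹ (j+1) := by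
    rw [inv_mul_apply]; congr 1; rw [s_apply]; split_ifs <;> omega
  simp only [namesAux]
  rw [e2a, e2b]

lemma perm_rev3 (A T : List (Finset ℕ)) (X Y Z : Finset ℕ) :
    (A ++ ([X, Y, Z] ++ T)).Perm (A ++ ([Z, Y, X] ++ T)) := by
  apply List.Perm.append_left A
  apply List.Perm.append_right T
  have h1 : [X, Y, Z].Perm [Y, X, Z] := List.Perm.swap Y X [Z]
  have h2 : [Y, X, Z].Perm [Y, Z, X] := List.Perm.cons Y (List.Perm.swap Z X [])
  have h3 : [Y, Z, X].Perm [Z, Y, X] := List.Perm.swap Z Y [X]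
  exact h1.trans (h2.trans h3)


/-- A single type I relation gives `I₃ = 1`, `I₂,₂ = 0`; a single commutation gives
`I₃ = 0`, `I₂,₂ = 1`. -/
theorem I3_I22_single_step (n : ℕ) (u v : List ℕ) (hu : ReducedExpr n u) :
    (StepI u v → I3 n (names u) (names v) = 1 ∧ I22 n (names u) (names v) = 0) ∧
    (StepII u v → I3 n (names u) (names v) = 0 ∧ I22 n (names u) (names v) = 1) := by
  constructor
  · intro hstep
    obtain ⟨a, b, i, j, hij⟩ := hstep
    have hexpr := hu.1
    have hIa : IsExpr n a := fun k hk => hexpr k (by simp [hk])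
    have hnd0 : (names (a ++ i :: j :: i :: b)).Nodup := nodup_names hu
    have hi := hexpr i (by simp)
    have hj := hexpr j (by simp)
    have hmid : (a ++ i :: j :: i :: b) = a ++ ([i, j, i] ++ b) := rfl
    have hmid' : (a ++ j :: i :: j :: b) = a ++ ([j, i, j] ++ b) := rfl
    have hnm : ∀ m : List ℕ, names (a ++ (m ++ b)) =
        namesAux 1 a ++ (namesAux (wperm a) m ++ namesAux (wperm m * wperm a) b) := by
      intro m
      rw [names, namesAux_append, namesAux_append, mul_one]
    rcases hij with hij | hij
    · -- j = i + 1
      subst hij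
      have hinj := (wperm a)⁻¹.injective
      have hP : (wperm a)⁻¹ i ∈ Finset.Icc 1 n := by
        rw [Finset.mem_Icc]; exact wperm_inv_mem n hIa ⟨hi.1, by omega⟩
      have hQ : (wperm a)⁻¹ (i+1) ∈ Finset.Icc 1 n := by
        rw [Finset.mem_Icc]; exact wperm_inv_mem n hIa ⟨by omega, by omega⟩
      have hR : (wperm a)⁻¹ (i+2) ∈ Finset.Icc 1 n := by
        rw [Finset.mem_Icc]; exact wperm_inv_mem n hIa ⟨by omega, by omega⟩
      have hPQ : (wperm a)⁻¹ i ≠ (wperm a)⁻¹ (i+1) := fun h => by have := hinj h; omega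
      have hPR : (wperm a)⁻¹ i ≠ (wperm a)⁻¹ (i+2) := fun h => by have := hinj h; omega
      have hQR : (wperm a)⁻¹ (i+1) ≠ (wperm a)⁻¹ (i+2) := fun h => by have := hinj h; omega
      have hNu : names (a ++ i :: (i+1) :: i :: b) =
          namesAux 1 a ++ ([{(wperm a)⁻¹ i, (wperm a)⁻¹ (i+1)},
            {(wperm a)⁻¹ i, (wperm a)⁻¹ (i+2)}, {(wperm a)⁻¹ (i+1), (wperm a)⁻¹ (i+2)}] ++
            namesAux (wperm [i, i+1, i] * wperm a) b) := by
        rw [hmid, hnm, namesAux_braid1]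
      have hNv : names (a ++ (i+1) :: i :: (i+1) :: b) =
          namesAux 1 a ++ ([{(wperm a)⁻¹ (i+1), (wperm a)⁻¹ (i+2)},
            {(wperm a)⁻¹ i, (wperm a)⁻¹ (i+2)}, {(wperm a)⁻¹ i, (wperm a)⁻¹ (i+1)}] ++
            namesAux (wperm [i, i+1, i] * wperm a) b) := by
        rw [hmid', hnm, namesAux_braid2, wperm_braid]
      rw [hNu] at hnd0
      rw [hNu, hNv]
      exact stepI_counts n _ _ _ _ _ hP hQ hR hPQ hPR hQR hnd0
    · -- i = j + 1
      subst hij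
      have hinj := (wperm a)⁻¹.injective
      have hP : (wperm a)⁻¹ j ∈ Finset.Icc 1 n := by
        rw [Finset.mem_Icc]; exact wperm_inv_mem n hIa ⟨hj.1, by omega⟩
      have hQ : (wperm a)⁻¹ (j+1) ∈ Finset.Icc 1 n := by
        rw [Finset.mem_Icc]; exact wperm_inv_mem n hIa ⟨by omega, by omega⟩
      have hR : (wperm a)⁻¹ (j+2) ∈ Finset.Icc 1 n := by
        rw [Finset.mem_Icc]; exact wperm_inv_mem n hIa ⟨by omega, by omega⟩
      have hPQ : (wperm a)⁻¹ j ≠ (wperm a)⁻¹ (j+1) := fun h => by have := hinj h; omega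
      have hPR : (wperm a)⁻¹ j ≠ (wperm a)⁻¹ (j+2) := fun h => by have := hinj h; omega
      have hQR : (wperm a)⁻¹ (j+1) ≠ (wperm a)⁻¹ (j+2) := fun h => by have := hinj h; omega
      have hNu : names (a ++ (j+1) :: j :: (j+1) :: b) =
          namesAux 1 a ++ ([{(wperm a)⁻¹ (j+1), (wperm a)⁻¹ (j+2)},
            {(wperm a)⁻¹ j, (wperm a)⁻¹ (j+2)}, {(wperm a)⁻¹ j, (wperm a)⁻¹ (j+1)}] ++
            namesAux (wperm [j, j+1, j] * wperm a) b) := by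
        rw [hmid, hnm, namesAux_braid2, wperm_braid]
      have hNv : names (a ++ j :: (j+1) :: j :: b) =
          namesAux 1 a ++ ([{(wperm a)⁻¹ j, (wperm a)⁻¹ (j+1)},
            {(wperm a)⁻¹ j, (wperm a)⁻¹ (j+2)}, {(wperm a)⁻¹ (j+1), (wperm a)⁻¹ (j+2)}] ++
            namesAux (wperm [j, j+1, j] * wperm a) b) := by
        rw [hmid', hnm, namesAux_braid1]
      rw [hNu] at hnd0
      have hndv : (namesAux 1 a ++ ([{(wperm a)⁻¹ j, (wperm a)⁻¹ (j+1)},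
            {(wperm a)⁻¹ j, (wperm a)⁻¹ (j+2)}, {(wperm a)⁻¹ (j+1), (wperm a)⁻¹ (j+2)}] ++
            namesAux (wperm [j, j+1, j] * wperm a) b)).Nodup :=
        (perm_rev3 _ _ _ _ _).nodup hnd0
      rw [hNu, hNv, I3_comm, I22_comm]
      exact stepI_counts n _ _ _ _ _ hP hQ hR hPQ hPR hQR hndv
  · intro hstep
    obtain ⟨a, b, i, j, hij⟩ := hstep
    have hexpr := hu.1
    have hIa : IsExpr n a := fun k hk => hexpr k (by simp [hk])
    have hnd0 : (names (a ++ i :: j :: b)).Nodup := nodup_names hu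
    have hi := hexpr i (by simp)
    have hj := hexpr j (by simp)
    have hmid : (a ++ i :: j :: b) = a ++ ([i, j] ++ b) := rfl
    have hmid' : (a ++ j :: i :: b) = a ++ ([j, i] ++ b) := rfl
    have hnm : ∀ m : List ℕ, names (a ++ (m ++ b)) =
        namesAux 1 a ++ (namesAux (wperm a) m ++ namesAux (wperm m * wperm a) b) := by
      intro m
      rw [names, namesAux_append, namesAux_append, mul_one]
    have hinj := (wperm a)⁻¹.injective
    have hP : (wperm a)⁻¹ i ∈ Finset.Icc 1 n := by
      rw [Finset.mem_Icc]; exact wperm_inv_mem n hIa ⟨hi.1, by omega⟩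
    have hQ : (wperm a)⁻¹ (i+1) ∈ Finset.Icc 1 n := by
      rw [Finset.mem_Icc]; exact wperm_inv_mem n hIa ⟨by omega, by omega⟩
    have hP' : (wperm a)⁻¹ j ∈ Finset.Icc 1 n := by
      rw [Finset.mem_Icc]; exact wperm_inv_mem n hIa ⟨hj.1, by omega⟩
    have hQ' : (wperm a)⁻¹ (j+1) ∈ Finset.Icc 1 n := by
      rw [Finset.mem_Icc]; exact wperm_inv_mem n hIa ⟨by omega, by omega⟩
    have h1 : (wperm a)⁻¹ i ≠ (wperm a)⁻¹ (i+1) := fun h => by have := hinj h; omega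
    have h2 : (wperm a)⁻¹ i ≠ (wperm a)⁻¹ j := fun h => by have := hinj h; omega
    have h3 : (wperm a)⁻¹ i ≠ (wperm a)⁻¹ (j+1) := fun h => by have := hinj h; omega
    have h4 : (wperm a)⁻¹ (i+1) ≠ (wperm a)⁻¹ j := fun h => by have := hinj h; omega
    have h5 : (wperm a)⁻¹ (i+1) ≠ (wperm a)⁻¹ (j+1) := fun h => by have := hinj h; omega
    have h6 : (wperm a)⁻¹ j ≠ (wperm a)⁻¹ (j+1) := fun h => by have := hinj h; omega
    have hNu : names (a ++ i :: j :: b) =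
        namesAux 1 a ++ ([{(wperm a)⁻¹ i, (wperm a)⁻¹ (i+1)},
          {(wperm a)⁻¹ j, (wperm a)⁻¹ (j+1)}] ++ namesAux (wperm [i, j] * wperm a) b) := by
      rw [hmid, hnm, namesAux_comm2 _ hij]
    have hNv : names (a ++ j :: i :: b) =
        namesAux 1 a ++ ([{(wperm a)⁻¹ j, (wperm a)⁻¹ (j+1)},
          {(wperm a)⁻¹ i, (wperm a)⁻¹ (i+1)}] ++ namesAux (wperm [i, j] * wperm a) b) := by
      rw [hmid', hnm, namesAux_comm2 _ (Or.symm hij), wperm_comm hij]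
    rw [hNu] at hnd0
    rw [hNu, hNv]
    exact stepII_counts n _ _ _ _ _ _ hP hQ hP' hQ' h1 h2 h3 h4 h5 h6 hnd0

end
end
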